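/- Let T₁ and T₂ be two spanning trees on vertex set [n] with symmetric difference edges F = {f₁,…,f_ℓ} ⊆ T₂∖T₁ and G = {g₁,…,g_ℓ} ⊆ T₁∖T₂. Then F and G can be paired up (after reindexing) so that for every i ∈ [ℓ], the edge set T₁ ∪ {f_i} ∖ {g_i} is a spanning tree. -/

import Mathlib

open SimpleGraph

variable {V : Type*}

lemma STE.reachable_sdiff_of_walk {T : SimpleGraph V} {e : Sym2 V} {u v : V}
    (p : T.Walk u v) (he : e ∉ p.edges) :
    (T \ SimpleGraph.fromEdgeSet {e}).Reachable u v := by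
  refine ⟨p.transfer _ fun e' he' => ?_⟩
  simp only [edgeSet_sdiff, edgeSet_fromEdgeSet, edgeSet_sdiff_sdiff_isDiag, Set.mem_diff,
    Set.mem_singleton_iff]
  exact ⟨p.edges_subset_edgeSet he', fun h' => he (h' ▸ he')⟩

lemma STE.exists_walk_of_reachable_sdiff {T : SimpleGraph V} {e : Sym2 V} {u v : V}
    (h : (T \ SimpleGraph.fromEdgeSet {e}).Reachable u v) :
    ∃ p : T.Walk u v, e ∉ p.edges := by
  obtain ⟨q⟩ := h
  have hsub : ∀ e' ∈ q.edges, e' ∈ T.edgeSet ∧ e' ≠ e := by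
    intro e' he'
    have := q.edges_subset_edgeSet he'
    simpa [edgeSet_sdiff, edgeSet_fromEdgeSet, edgeSet_sdiff_sdiff_isDiag] using this
  refine ⟨q.transfer T fun e' he' => (hsub e' he').1, ?_⟩
  rw [Walk.edges_transfer]
  exact fun hmem => (hsub e hmem).2 rfl

lemma STE.step {T : SimpleGraph V} {a b : V} :
    ∀ {u w : V} (_ : T.Walk u w),
      ((T \ SimpleGraph.fromEdgeSet {s(a, b)}).Reachable a u ∨
        (T \ SimpleGraph.fromEdgeSet {s(a, b)}).Reachable b u) →
      ((T \ SimpleGraph.fromEdgeSet {s(a, b)}).Reachable a w ∨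
        (T \ SimpleGraph.fromEdgeSet {s(a, b)}).Reachable b w) := by
  intro u w p
  induction p with
  | nil => exact id
  | @cons u' c w' h q ih =>
    intro hu
    apply ih
    by_cases he : s(u', c) = s(a, b)
    · rw [Sym2.eq_iff] at he
      rcases he with ⟨rfl, rfl⟩ | ⟨rfl, rfl⟩
      · exact Or.inr (Reachable.refl _)
      · exact Or.inl (Reachable.refl _)
    · have hadj : (T \ SimpleGraph.fromEdgeSet {s(a, b)}).Adj u' c := by
        rw [sdiff_adj, fromEdgeSet_adj]
        exact ⟨h, by simp [he]⟩
      exact hu.imp (fun h' => h'.trans hadj.reachable) fun h' => h'.trans hadj.reachable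

lemma STE.reachable_delete_or {T : SimpleGraph V} (hT : T.Connected) {a b : V} (v : V) :
    (T \ SimpleGraph.fromEdgeSet {s(a, b)}).Reachable a v ∨
      (T \ SimpleGraph.fromEdgeSet {s(a, b)}).Reachable b v := by
  obtain ⟨p⟩ := hT a v
  exact STE.step p (Or.inl (Reachable.refl _))

variable {V : Type*}

lemma STE.tree_eq_of_le {T T' : SimpleGraph V} (hT : T.IsTree) (hT' : T'.IsTree) (h : T ≤ T') :
    T = T' := by
  rw [← edgeSet_inj]
  refine Set.Subset.antisymm (edgeSet_mono h) ?_
  intro e he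
  by_contra hne
  induction e using Sym2.ind with
  | _ u v =>
    have hadj : T'.Adj u v := (mem_edgeSet _).mp he
    have hbridge := isAcyclic_iff_forall_adj_isBridge.mp hT'.2 hadj
    have hall := isBridge_iff_adj_and_forall_walk_mem_edges.mp hbridge
    obtain ⟨p⟩ := hT.1 u v
    have hq := hall (p.transfer T' fun e' he' =>
      edgeSet_mono h (p.edges_subset_edgeSet he'))
    rw [Walk.edges_transfer] at hq
    exact hne (p.edges_subset_edgeSet hq)

lemma STE.swap_isTree {T : SimpleGraph V} (hT : T.IsTree) {a b x y : V}
    (hab : T.Adj a b) (hxy : x ≠ y) (hne : s(x, y) ≠ s(a, b))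
    (hax : (T \ SimpleGraph.fromEdgeSet {s(a, b)}).Reachable a x)
    (hby : (T \ SimpleGraph.fromEdgeSet {s(a, b)}).Reachable b y) :
    (SimpleGraph.fromEdgeSet (insert s(x, y) T.edgeSet \ {s(a, b)})).IsTree := by
  set G := T \ SimpleGraph.fromEdgeSet {s(a, b)} with hG
  set T' := SimpleGraph.fromEdgeSet (insert s(x, y) T.edgeSet \ {s(a, b)}) with hT'def
  have hGT' : G ≤ T' := by
    intro u w huw
    rw [hG, sdiff_adj, fromEdgeSet_adj] at huw
    rw [hT'def, fromEdgeSet_adj]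
    exact ⟨⟨Or.inr ((mem_edgeSet _).mpr huw.1), fun hm => huw.2 ⟨hm, huw.1.ne⟩⟩, huw.1.ne⟩
  have hxyT' : T'.Adj x y := by
    rw [hT'def, fromEdgeSet_adj]
    exact ⟨⟨Or.inl rfl, hne⟩, hxy⟩
  have hnab : ¬G.Reachable a b := by
    have hb := isAcyclic_iff_forall_adj_isBridge.mp hT.2 hab
    exact isBridge_iff.mp hb
  have hnxy : ¬G.Reachable x y := fun hr => hnab (hax.trans (hr.trans hby.symm))
  constructor
  · haveI := hT.1.nonempty
    have key : ∀ v, T'.Reachable v x := by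
      intro v
      rcases STE.reachable_delete_or hT.1 (a := a) (b := b) v with hv | hv
      · exact (hv.symm.trans hax).mono hGT'
      · exact ((hv.symm.trans hby).mono hGT').trans hxyT'.symm.reachable
    exact Connected.mk fun u w => (key u).trans (key w).symm
  · intro u c hc
    by_cases hf : s(x, y) ∈ c.edges
    · have h2 := (adj_and_reachable_delete_edges_iff_exists_cycle.mpr ⟨u, c, hc, hf⟩).2
      have hle : T' \ SimpleGraph.fromEdgeSet {s(x, y)} ≤ G := by
        intro u' w' h'
        rw [sdiff_adj, hT'def, fromEdgeSet_adj, fromEdgeSet_adj] at h'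
        rw [hG, sdiff_adj, fromEdgeSet_adj]
        obtain ⟨⟨⟨hm, hg'⟩, hne'⟩, hnf⟩ := h'
        have hfne : s(u', w') ≠ s(x, y) := fun hh => hnf ⟨hh, hne'⟩
        rcases hm with hm | hm
        · exact absurd hm hfne
        · exact ⟨(mem_edgeSet _).mp hm, fun hc' => hg' hc'.1⟩
      exact hnxy (h2.mono hle)
    · have hedges : ∀ e ∈ c.edges, e ∈ T.edgeSet := by
        intro e he
        have hmem := c.edges_subset_edgeSet he
        rw [hT'def, edgeSet_fromEdgeSet] at hmem
        obtain ⟨⟨hm, -⟩, -⟩ := hmem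
        rcases hm with rfl | hm
        · exact absurd he hf
        · exact hm
      exact hT.2 (c.transfer T hedges) (hc.transfer hedges)
def STE.extendEquiv {α β : Type*} [DecidableEq α] [DecidableEq β] {S : Set α} {R : Set β}
    {f : α} {g : β}
    (hf : f ∈ S) (hg : g ∈ R) (e : (S \ {f} : Set α) ≃ (R \ {g} : Set β)) : S ≃ R where
  toFun x := if h : (x : α) = f then ⟨g, hg⟩ else
    ⟨e ⟨x, ⟨x.2, h⟩⟩, (e ⟨x, ⟨x.2, h⟩⟩).2.1⟩
  invFun y := if h : (y : β) = g then ⟨f, hf⟩ else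
    ⟨e.symm ⟨y, ⟨y.2, h⟩⟩, (e.symm ⟨y, ⟨y.2, h⟩⟩).2.1⟩
  left_inv x := by
    dsimp only
    by_cases h : (x : α) = f
    · rw [dif_pos h, dif_pos rfl]
      exact Subtype.ext h.symm
    · rw [dif_neg h]
      have h2 : ((⟨(e ⟨x, ⟨x.2, h⟩⟩ : β), (e ⟨x, ⟨x.2, h⟩⟩).2.1⟩ : R) : β) ≠ g :=
        (e ⟨x, ⟨x.2, h⟩⟩).2.2
      rw [dif_neg h2]
      have h1 : (⟨((⟨(e ⟨x, ⟨x.2, h⟩⟩ : β), (e ⟨x, ⟨x.2, h⟩⟩).2.1⟩ : R) : β),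
          ⟨(⟨(e ⟨x, ⟨x.2, h⟩⟩ : β), (e ⟨x, ⟨x.2, h⟩⟩).2.1⟩ : R).2, h2⟩⟩ :
          (R \ {g} : Set β)) = e ⟨x, ⟨x.2, h⟩⟩ := Subtype.ext rfl
      rw [h1, Equiv.symm_apply_apply]
  right_inv y := by
    dsimp only
    by_cases h : (y : β) = g
    · rw [dif_pos h, dif_pos rfl]
      exact Subtype.ext h.symm
    · rw [dif_neg h]
      have h2 : ((⟨(e.symm ⟨y, ⟨y.2, h⟩⟩ : α), (e.symm ⟨y, ⟨y.2, h⟩⟩).2.1⟩ : S) : α) ≠ f :=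
        (e.symm ⟨y, ⟨y.2, h⟩⟩).2.2
      rw [dif_neg h2]
      have h1 : (⟨((⟨(e.symm ⟨y, ⟨y.2, h⟩⟩ : α), (e.symm ⟨y, ⟨y.2, h⟩⟩).2.1⟩ : S) : α),
          ⟨(⟨(e.symm ⟨y, ⟨y.2, h⟩⟩ : α), (e.symm ⟨y, ⟨y.2, h⟩⟩).2.1⟩ : S).2, h2⟩⟩ :
          (S \ {f} : Set α)) = e.symm ⟨y, ⟨y.2, h⟩⟩ := Subtype.ext rfl
      rw [h1, Equiv.apply_symm_apply]

lemma STE.extendEquiv_apply_of_eq {α β : Type*} [DecidableEq α] [DecidableEq β] {S : Set α} {R : Set β} {f : α} {g : β}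
    (hf : f ∈ S) (hg : g ∈ R) (e : (S \ {f} : Set α) ≃ (R \ {g} : Set β)) (x : S)
    (h : (x : α) = f) : STE.extendEquiv hf hg e x = ⟨g, hg⟩ := by
  simp only [STE.extendEquiv, Equiv.coe_fn_mk, dif_pos h]

lemma STE.extendEquiv_apply_of_ne {α β : Type*} [DecidableEq α] [DecidableEq β] {S : Set α} {R : Set β} {f : α} {g : β}
    (hf : f ∈ S) (hg : g ∈ R) (e : (S \ {f} : Set α) ≃ (R \ {g} : Set β)) (x : S)
    (h : (x : α) ≠ f) :
    (STE.extendEquiv hf hg e x : β) = (e ⟨x, ⟨x.2, h⟩⟩ : β) := by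
  simp only [STE.extendEquiv, Equiv.coe_fn_mk, dif_neg h]
/-- Spanning-tree exchange lemma: if `T₁` and `T₂` are spanning trees on the vertex set
`Fin n`, then the edges of `T₂ \ T₁` and of `T₁ \ T₂` can be paired up by a bijection `σ`
such that for every edge `f` of `T₂ \ T₁`, replacing the edge `σ f` of `T₁` by `f`
again yields a spanning tree. -/
theorem spanning_tree_exchange (n : ℕ) (T₁ T₂ : SimpleGraph (Fin n))
    (h₁ : T₁.IsTree) (h₂ : T₂.IsTree) :
    ∃ σ : (T₂.edgeSet \ T₁.edgeSet : Set (Sym2 (Fin n))) ≃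
          (T₁.edgeSet \ T₂.edgeSet : Set (Sym2 (Fin n))),
      ∀ f : (T₂.edgeSet \ T₁.edgeSet : Set (Sym2 (Fin n))),
        (SimpleGraph.fromEdgeSet
          (insert (f : Sym2 (Fin n)) T₁.edgeSet \ {(σ f : Sym2 (Fin n))})).IsTree := by
  classical
  suffices H : ∀ (k : ℕ) (T₂ : SimpleGraph (Fin n)), T₂.IsTree →
      (T₂.edgeSet \ T₁.edgeSet).ncard = k →
      ∃ σ : (T₂.edgeSet \ T₁.edgeSet : Set (Sym2 (Fin n))) ≃
            (T₁.edgeSet \ T₂.edgeSet : Set (Sym2 (Fin n))),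
        ∀ f : (T₂.edgeSet \ T₁.edgeSet : Set (Sym2 (Fin n))),
          (SimpleGraph.fromEdgeSet
            (insert (f : Sym2 (Fin n)) T₁.edgeSet \ {(σ f : Sym2 (Fin n))})).IsTree by
    exact H _ T₂ h₂ rfl
  intro k
  induction k with
  | zero =>
    intro T₂ h₂ hk
    have hS : T₂.edgeSet \ T₁.edgeSet = ∅ := (Set.ncard_eq_zero (Set.toFinite _)).mp hk
    have hle : T₂ ≤ T₁ := edgeSet_subset_edgeSet.mp (Set.diff_eq_empty.mp hS)
    have heq : T₂ = T₁ := STE.tree_eq_of_le h₂ h₁ hle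
    subst heq
    exact ⟨Equiv.refl _, fun f => absurd f.2 (by simp)⟩
  | succ k ih =>
    intro T₂ h₂ hk
    have hSne : (T₂.edgeSet \ T₁.edgeSet).Nonempty := by
      rw [Set.nonempty_iff_ne_empty]
      intro h
      rw [h, Set.ncard_empty] at hk
      omega
    have hRne : (T₁.edgeSet \ T₂.edgeSet).Nonempty := by
      by_contra hR
      rw [Set.not_nonempty_iff_eq_empty] at hR
      have heq : T₁ = T₂ :=
        STE.tree_eq_of_le h₁ h₂ (edgeSet_subset_edgeSet.mp (Set.diff_eq_empty.mp hR))
      rcases hSne with ⟨e, he1, he2⟩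
      rw [← heq] at he1
      exact he2 he1
    obtain ⟨g, hg1, hg2⟩ := hRne
    induction g using Sym2.ind with
    | _ a b =>
    have hab : T₁.Adj a b := (mem_edgeSet _).mp hg1
    have hnabG : ¬(T₁ \ SimpleGraph.fromEdgeSet {s(a, b)}).Reachable a b :=
      isBridge_iff.mp (isAcyclic_iff_forall_adj_isBridge.mp h₁.2 hab)
    obtain ⟨p, hp, hpu⟩ := h₂.existsUnique_path a b
    obtain ⟨d, hdp, hdA, hdA'⟩ := p.exists_boundary_dart
      {v | (T₁ \ SimpleGraph.fromEdgeSet {s(a, b)}).Reachable a v}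
      (Reachable.refl _) hnabG
    set x := d.fst with hxdef
    set y := d.snd with hydef
    have hdadj : T₂.Adj x y := d.adj
    have hxy : x ≠ y := hdadj.ne
    have hfT₂ : s(x, y) ∈ T₂.edgeSet := (mem_edgeSet _).mpr hdadj
    have hfg : s(x, y) ≠ s(a, b) := fun h => hg2 (h ▸ hfT₂)
    have hfT₁ : s(x, y) ∉ T₁.edgeSet := by
      intro hmem
      have hadj' : (T₁ \ SimpleGraph.fromEdgeSet {s(a, b)}).Adj x y := by
        rw [sdiff_adj, fromEdgeSet_adj]
        exact ⟨(mem_edgeSet _).mp hmem, fun hc => hfg hc.1⟩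
      exact hdA' (hdA.trans hadj'.reachable)
    have hby : (T₁ \ SimpleGraph.fromEdgeSet {s(a, b)}).Reachable b y :=
      (STE.reachable_delete_or h₁.1 (a := a) (b := b) y).resolve_left hdA'
    have tree1 := STE.swap_isTree h₁ hab hxy hfg hdA hby
    have hfp : s(x, y) ∈ p.edges := List.mem_map_of_mem (f := Dart.edge) hdp
    have hnab2 : ¬(T₂ \ SimpleGraph.fromEdgeSet {s(x, y)}).Reachable a b := by
      intro hr
      obtain ⟨q, hq⟩ := STE.exists_walk_of_reachable_sdiff hr
      have heq := hpu (q.toPath : T₂.Walk a b) q.toPath.2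
      have hmem : s(x, y) ∈ (q.toPath : T₂.Walk a b).edges := heq ▸ hfp
      exact hq (Walk.edges_toPath_subset q hmem)
    have hxa_or := STE.reachable_delete_or h₂.1 (a := x) (b := y) a
    have hxb_or := STE.reachable_delete_or h₂.1 (a := x) (b := y) b
    have hgf : s(a, b) ≠ s(x, y) := fun h => hfg h.symm
    have hab' : a ≠ b := hab.ne
    have tree2 : (SimpleGraph.fromEdgeSet (insert s(a, b) T₂.edgeSet \ {s(x, y)})).IsTree := by
      rcases hxa_or with hxa | hya
      · rcases hxb_or with hxb | hyb
        · exact absurd (hxa.symm.trans hxb) hnab2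
        · exact STE.swap_isTree h₂ hdadj hab' hgf hxa hyb
      · rcases hxb_or with hxb | hyb
        · have h' := STE.swap_isTree h₂ hdadj hab'.symm
            (show s(b, a) ≠ s(x, y) by rw [Sym2.eq_swap (a := b) (b := a)]; exact hgf)
            hxb hya
          rw [Sym2.eq_swap (a := a) (b := b)]
          exact h'
        · exact absurd (hya.symm.trans hyb) hnab2
    set T₂' := SimpleGraph.fromEdgeSet (insert s(a, b) T₂.edgeSet \ {s(x, y)}) with hT₂'def
    have hE : T₂'.edgeSet = insert s(a, b) T₂.edgeSet \ {s(x, y)} := by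
      rw [hT₂'def, edgeSet_fromEdgeSet]
      ext e
      simp only [Set.mem_diff, Set.mem_insert_iff, Set.mem_singleton_iff, Set.mem_setOf_eq]
      constructor
      · rintro ⟨h1, -⟩; exact h1
      · rintro ⟨h1, h2⟩
        refine ⟨⟨h1, h2⟩, ?_⟩
        rcases h1 with rfl | h1
        · exact fun hd => hab' (Sym2.mk_isDiag_iff.mp hd)
        · exact T₂.not_isDiag_of_mem_edgeSet h1
    have hS' : T₂'.edgeSet \ T₁.edgeSet = (T₂.edgeSet \ T₁.edgeSet) \ {s(x, y)} := by
      rw [hE]; ext e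
      simp only [Set.mem_diff, Set.mem_insert_iff, Set.mem_singleton_iff]
      constructor
      · rintro ⟨⟨rfl | h1, h2⟩, h3⟩
        · exact absurd hg1 h3
        · exact ⟨⟨h1, h3⟩, h2⟩
      · rintro ⟨⟨h1, h2⟩, h3⟩
        exact ⟨⟨Or.inr h1, h3⟩, h2⟩
    have hR' : T₁.edgeSet \ T₂'.edgeSet = (T₁.edgeSet \ T₂.edgeSet) \ {s(a, b)} := by
      rw [hE]; ext e
      simp only [Set.mem_diff, Set.mem_insert_iff, Set.mem_singleton_iff]
      constructor
      · rintro ⟨h1, h2⟩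
        have hef : e ≠ s(x, y) := fun h => hfT₁ (h ▸ h1)
        exact ⟨⟨h1, fun hmem => h2 ⟨Or.inr hmem, hef⟩⟩, fun heg => h2 ⟨Or.inl heg, hef⟩⟩
      · rintro ⟨⟨h1, h2⟩, h3⟩
        refine ⟨h1, fun hmem => ?_⟩
        rcases hmem.1 with rfl | hm
        · exact h3 rfl
        · exact h2 hm
    have hfS : s(x, y) ∈ T₂.edgeSet \ T₁.edgeSet := ⟨hfT₂, hfT₁⟩
    have hgR : s(a, b) ∈ T₁.edgeSet \ T₂.edgeSet := ⟨hg1, hg2⟩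
    have hk' : (T₂'.edgeSet \ T₁.edgeSet).ncard = k := by
      rw [hS', Set.ncard_diff_singleton_of_mem hfS, hk]
      omega
    obtain ⟨σ', hσ'⟩ := ih T₂' tree2 hk'
    let σ'' : ((T₂.edgeSet \ T₁.edgeSet) \ {s(x, y)} : Set (Sym2 (Fin n))) ≃
        ((T₁.edgeSet \ T₂.edgeSet) \ {s(a, b)} : Set (Sym2 (Fin n))) :=
      (Equiv.setCongr hS'.symm).trans (σ'.trans (Equiv.setCongr hR'))
    refine ⟨STE.extendEquiv hfS hgR σ'', fun f' => ?_⟩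
    by_cases hcase : (f' : Sym2 (Fin n)) = s(x, y)
    · rw [STE.extendEquiv_apply_of_eq hfS hgR σ'' f' hcase, hcase]
      exact tree1
    · have hmem : (f' : Sym2 (Fin n)) ∈ T₂'.edgeSet \ T₁.edgeSet := by
        rw [hS']; exact ⟨f'.2, hcase⟩
      have hval : (σ'' ⟨(f' : Sym2 (Fin n)), ⟨f'.2, hcase⟩⟩ : Sym2 (Fin n)) =
          (σ' ⟨(f' : Sym2 (Fin n)), hmem⟩ : Sym2 (Fin n)) := rfl
      rw [STE.extendEquiv_apply_of_ne hfS hgR σ'' f' hcase, hval]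
      exact hσ' ⟨(f' : Sym2 (Fin n)), hmem⟩
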